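/- Let M be a strongly regular sequence with quotients m_p and let k₁, k₂ > 0. Then there exist constants C₃, C₄ > 0 such that k₁ ∫₀^∞ t^p h_M(k₂/t) dt ≥ C₃ C₄^p M_p for every p ∈ ℕ. (Lower moment bound.) -/

import Mathlib

open MeasureTheory Set

/-- Lower moment bound: `k₁ ∫₀^∞ t^p h_M(k₂/t) dt ≥ C₃ C₄^p M_p`. -/
theorem moment_lower_bound (M : ℕ → ℝ) (A B : ℝ)
    (hpos : ∀ p, 0 < M p) (hM0 : M 0 = 1)
    (hlc : ∀ p : ℕ, (M (p + 1)) ^ 2 ≤ M p * M (p + 2))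
    (hA : 0 < A) (hmg : ∀ p ℓ : ℕ, M (p + ℓ) ≤ A ^ (p + ℓ) * M p * M ℓ)
    (hB : 0 < B)
    (hsnq : ∀ p : ℕ, ∑' ℓ : ℕ, M (p + ℓ) / ((p + ℓ + 1) * M (p + ℓ + 1)) ≤ B * M p / M (p + 1))
    (h : ℝ → ℝ)
    (hdef : ∀ t : ℝ, 0 < t → h t = ⨅ p : ℕ, M p * t ^ p) (h0 : h 0 = 0)
    (k₁ k₂ : ℝ) (hk₁ : 0 < k₁) (hk₂ : 0 < k₂) :
    ∃ C₃ C₄ : ℝ, 0 < C₃ ∧ 0 < C₄ ∧ ∀ p : ℕ,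
      C₃ * C₄ ^ p * M p ≤ k₁ * ∫ t in Ioi (0 : ℝ), t ^ p * h (k₂ / t) := by
  set m : ℕ → ℝ := fun p => M (p + 1) / M p with hm_def
  have hmpos : ∀ p, 0 < m p := fun p => div_pos (hpos _) (hpos _)
  have hmmul : ∀ p, M p * m p = M (p + 1) := by
    intro p
    rw [hm_def]
    dsimp only
    rw [mul_comm, div_mul_cancel₀ _ (hpos p).ne']
  have hmono : Monotone m := by
    apply monotone_nat_of_le_succ
    intro p
    rw [hm_def]
    dsimp only
    rw [div_le_div_iff₀ (hpos p) (hpos (p + 1))]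
    nlinarith [hlc p]
  have up : ∀ p j, M p * m p ^ j ≤ M (p + j) := by
    intro p j
    induction j with
    | zero => simp
    | succ j ih =>
      calc M p * m p ^ (j + 1) = (M p * m p ^ j) * m p := by ring
        _ ≤ M (p + j) * m (p + j) :=
            mul_le_mul ih (hmono (Nat.le_add_right p j)) (hmpos p).le (hpos _).le
        _ = M (p + j + 1) := hmmul _
  have down : ∀ q j, M (q + j) ≤ M q * m (q + j) ^ j := by
    intro q j
    induction j with
    | zero => simp
    | succ j ih =>
      calc M (q + j + 1) = M (q + j) * m (q + j) := (hmmul _).symm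
        _ ≤ (M q * m (q + j) ^ j) * m (q + j) :=
            mul_le_mul_of_nonneg_right ih (hmpos _).le
        _ = M q * m (q + j) ^ (j + 1) := by ring
        _ ≤ M q * m (q + j + 1) ^ (j + 1) := by
            apply mul_le_mul_of_nonneg_left _ (hpos q).le
            exact pow_le_pow_left₀ (hmpos _).le (hmono (Nat.le_succ _)) _
  have key : ∀ p q, M p * m p ^ q ≤ M q * m p ^ p := by
    intro p q
    rcases le_total p q with hpq | hqp
    · obtain ⟨j, rfl⟩ := Nat.exists_eq_add_of_le hpq
      calc M p * m p ^ (p + j) = (M p * m p ^ j) * m p ^ p := by rw [pow_add]; ring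
        _ ≤ M (p + j) * m p ^ p :=
            mul_le_mul_of_nonneg_right (up p j) (pow_nonneg (hmpos p).le p)
    · obtain ⟨j, rfl⟩ := Nat.exists_eq_add_of_le hqp
      calc M (q + j) * m (q + j) ^ q ≤ (M q * m (q + j) ^ j) * m (q + j) ^ q :=
            mul_le_mul_of_nonneg_right (down q j) (pow_nonneg (hmpos _).le q)
        _ = M q * m (q + j) ^ (q + j) := by rw [pow_add]; ring
  have hbdd : ∀ t : ℝ, 0 < t → BddBelow (range fun q : ℕ => M q * t ^ q) := by
    intro t ht
    exact ⟨0, by rintro x ⟨q, rfl⟩; exact mul_nonneg (hpos q).le (pow_nonneg ht.le q)⟩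
  have hnn : ∀ t : ℝ, 0 < t → 0 ≤ h t := by
    intro t ht
    rw [hdef t ht]
    exact le_ciInf fun q => mul_nonneg (hpos q).le (pow_nonneg ht.le q)
  have hub : ∀ (t : ℝ) (q : ℕ), 0 < t → h t ≤ M q * t ^ q := by
    intro t q ht
    rw [hdef t ht]
    exact ciInf_le (hbdd t ht) q
  refine ⟨k₁ * M 1 * k₂, k₂ / 2, mul_pos (mul_pos hk₁ (hpos 1)) hk₂, by positivity, fun p => ?_⟩
  set R : ℝ := k₂ * m p with hR_def
  have hR : 0 < R := mul_pos hk₂ (hmpos p)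
  set c : ℝ := M p / m p ^ p with hc_def
  have hc : 0 < c := div_pos (hpos p) (pow_pos (hmpos p) p)
  set f : ℝ → ℝ := fun t => t ^ p * h (k₂ / t) with hf_def
  -- lower bound for h on the interval
  have hlb : ∀ t ∈ Ioc (0 : ℝ) R, c * t ^ p ≤ f t := by
    intro t ht
    have ht0 : 0 < t := ht.1
    have hkt : 0 < k₂ / t := div_pos hk₂ ht0
    have h1 : (m p)⁻¹ ≤ k₂ / t := by
      have : k₂ / R ≤ k₂ / t := div_le_div_of_nonneg_left hk₂.le ht0 ht.2
      calc (m p)⁻¹ = k₂ / R := by rw [hR_def, ← div_div, div_self hk₂.ne', one_div]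
        _ ≤ k₂ / t := this
    have hcle : c ≤ h (k₂ / t) := by
      rw [hdef _ hkt]
      apply le_ciInf
      intro q
      have h2 : M q * ((m p)⁻¹) ^ q ≤ M q * (k₂ / t) ^ q := by
        apply mul_le_mul_of_nonneg_left _ (hpos q).le
        exact pow_le_pow_left₀ (inv_nonneg.mpr (hmpos p).le) h1 q
      refine le_trans ?_ h2
      rw [hc_def, inv_pow, ← div_eq_mul_inv,
        div_le_div_iff₀ (pow_pos (hmpos p) p) (pow_pos (hmpos p) q)]
      exact key p q
    calc c * t ^ p ≤ h (k₂ / t) * t ^ p :=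
          mul_le_mul_of_nonneg_right hcle (pow_nonneg ht0.le p)
      _ = f t := by rw [hf_def]; ring
  -- measurability
  have hmeas : AEStronglyMeasurable f (volume.restrict (Ioi (0 : ℝ))) := by
    have hF : Measurable fun t : ℝ => t ^ p * ⨅ q : ℕ, M q * (k₂ / t) ^ q := by
      apply (measurable_id.pow_const p).mul
      exact Measurable.iInf fun q =>
        (measurable_const.div measurable_id).pow_const q |>.const_mul (M q)
    apply (hF.aestronglyMeasurable).congr
    filter_upwards [ae_restrict_mem measurableSet_Ioi] with t ht
    rw [hf_def]
    simp only
    rw [hdef _ (div_pos hk₂ ht)]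
  -- integrability
  have hint1 : IntegrableOn f (Ioc (0 : ℝ) 1) := by
    have hgc : IntegrableOn (fun _ : ℝ => (1 : ℝ)) (Ioc (0 : ℝ) 1) :=
      integrableOn_const measure_Ioc_lt_top.ne
    apply Integrable.mono' hgc
      (hmeas.mono_measure (Measure.restrict_mono Ioc_subset_Ioi_self le_rfl))
    filter_upwards [ae_restrict_mem measurableSet_Ioc] with t ht
    have ht0 : 0 < t := ht.1
    have hh0 : 0 ≤ h (k₂ / t) := hnn _ (div_pos hk₂ ht0)
    have hh1 : h (k₂ / t) ≤ 1 := by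
      have := hub (k₂ / t) 0 (div_pos hk₂ ht0)
      simpa [hM0] using this
    rw [Real.norm_eq_abs, abs_of_nonneg (by positivity)]
    calc t ^ p * h (k₂ / t) ≤ 1 * 1 := by
          apply mul_le_mul _ hh1 hh0 zero_le_one
          calc t ^ p ≤ 1 ^ p := pow_le_pow_left₀ ht0.le ht.2 p
            _ = 1 := one_pow p
      _ = 1 := mul_one 1
  have hint2 : IntegrableOn f (Ioi (1 : ℝ)) := by
    have hg : IntegrableOn (fun t : ℝ => (M (p + 2) * k₂ ^ (p + 2)) * t ^ (-2 : ℝ))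
        (Ioi (1 : ℝ)) := by
      exact (integrableOn_Ioi_rpow_of_lt (by norm_num) one_pos).const_mul _
    apply Integrable.mono' hg
      (hmeas.mono_measure (Measure.restrict_mono (Ioi_subset_Ioi (by norm_num)) le_rfl))
    filter_upwards [ae_restrict_mem measurableSet_Ioi] with t ht
    have ht0 : (0 : ℝ) < t := lt_trans one_pos ht
    have hh0 : 0 ≤ h (k₂ / t) := hnn _ (div_pos hk₂ ht0)
    have hh2 : h (k₂ / t) ≤ M (p + 2) * (k₂ / t) ^ (p + 2) :=
      hub (k₂ / t) (p + 2) (div_pos hk₂ ht0)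
    rw [Real.norm_eq_abs, abs_of_nonneg (by positivity)]
    have hrw : t ^ (-2 : ℝ) = (t ^ 2)⁻¹ := by
      rw [Real.rpow_neg ht0.le, ← Real.rpow_natCast t 2]
      norm_num
    rw [hrw]
    calc t ^ p * h (k₂ / t) ≤ t ^ p * (M (p + 2) * (k₂ / t) ^ (p + 2)) :=
          mul_le_mul_of_nonneg_left hh2 (by positivity)
      _ = M (p + 2) * k₂ ^ (p + 2) * (t ^ 2)⁻¹ := by
          rw [div_pow, pow_add]
          field_simp
          ring
  have hint : IntegrableOn f (Ioi (0 : ℝ)) := by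
    have hsplit : Ioi (0 : ℝ) = Ioc 0 1 ∪ Ioi 1 := (Ioc_union_Ioi_eq_Ioi zero_le_one).symm
    rw [hsplit]
    exact hint1.union hint2
  -- nonnegativity a.e.
  have hfnn : 0 ≤ᵐ[volume.restrict (Ioi (0 : ℝ))] f := by
    filter_upwards [ae_restrict_mem measurableSet_Ioi] with t ht
    have : 0 ≤ h (k₂ / t) := hnn _ (div_pos hk₂ ht)
    exact mul_nonneg (pow_nonneg ht.le p) this
  -- the chain of inequalities
  have step1 : ∫ t in Ioc (0 : ℝ) R, f t ≤ ∫ t in Ioi (0 : ℝ), f t :=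
    setIntegral_mono_set hint hfnn (HasSubset.Subset.eventuallyLE Ioc_subset_Ioi_self)
  have hgint : IntegrableOn (fun t : ℝ => c * t ^ p) (Ioc (0 : ℝ) R) :=
    (continuous_const.mul (continuous_pow p)).integrableOn_Ioc
  have step2 : ∫ t in Ioc (0 : ℝ) R, c * t ^ p ≤ ∫ t in Ioc (0 : ℝ) R, f t :=
    setIntegral_mono_on hgint (hint.mono_set Ioc_subset_Ioi_self) measurableSet_Ioc hlb
  have step3 : ∫ t in Ioc (0 : ℝ) R, c * t ^ p = c * (R ^ (p + 1) / (p + 1)) := by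
    rw [← intervalIntegral.integral_of_le hR.le, intervalIntegral.integral_const_mul,
      integral_pow]
    norm_num
  -- final arithmetic
  have hM1 : M 1 ≤ m p := by
    have h0 : m 0 = M 1 := by rw [hm_def]; simp [hM0]
    rw [← h0]
    exact hmono (Nat.zero_le p)
  have hp2 : ((p : ℝ) + 1) ≤ 2 ^ p := by
    have := Nat.lt_two_pow_self (n := p)
    exact_mod_cast Nat.succ_le_of_lt this
  have harith : k₁ * M 1 * k₂ * (k₂ / 2) ^ p * M p ≤ k₁ * (c * (R ^ (p + 1) / (p + 1))) := by
    have hcR : c * (R ^ (p + 1) / ((p : ℝ) + 1)) = M p * k₂ ^ (p + 1) * (m p / ((p : ℝ) + 1)) := by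
      rw [hc_def, hR_def, mul_pow, pow_succ (m p)]
      have hmp : (0 : ℝ) < m p ^ p := pow_pos (hmpos p) p
      field_simp
    rw [hcR]
    have hdiv : M 1 / 2 ^ p ≤ m p / ((p : ℝ) + 1) := by
      apply div_le_div₀ (hmpos p).le hM1 (by positivity) hp2
    calc k₁ * M 1 * k₂ * (k₂ / 2) ^ p * M p
        = (k₁ * k₂ ^ (p + 1) * M p) * (M 1 / 2 ^ p) := by
          rw [div_pow, pow_succ]
          ring
      _ ≤ (k₁ * k₂ ^ (p + 1) * M p) * (m p / ((p : ℝ) + 1)) :=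
          mul_le_mul_of_nonneg_left hdiv
            (mul_nonneg (mul_nonneg hk₁.le (pow_nonneg hk₂.le _)) (hpos p).le)
      _ = k₁ * (M p * k₂ ^ (p + 1) * (m p / ((p : ℝ) + 1))) := by ring
  calc k₁ * M 1 * k₂ * (k₂ / 2) ^ p * M p
      ≤ k₁ * (c * (R ^ (p + 1) / (p + 1))) := harith
    _ = k₁ * ∫ t in Ioc (0 : ℝ) R, c * t ^ p := by rw [step3]
    _ ≤ k₁ * ∫ t in Ioi (0 : ℝ), f t :=
        mul_le_mul_of_nonneg_left (le_trans step2 step1) hk₁.le
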